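/- Let X₀ and Z be square-integrable ℝᵈ-valued random vectors, s ∈ [0, 1), X_s = (1 − s)·X₀ + s·Z, t = arctan(s / (1 − s)), λ = √(s² + (1 − s)²), and let T map a measurable function g : ℝᵈ → ℝᵈ to the function x ↦ (1/λ)·[(1 − 2s)·x + (1 − 2s + 2s²)·g(x)]. Then for all measurable g₁, g₂ with g₁(X_s), g₂(X_s) square-integrable: E‖ T(g₁)(X_s) − (cos(t)Z − sin(t)X₀) ‖² ≤ E‖ T(g₂)(X_s) − (cos(t)Z − sin(t)X₀) ‖² if and only if E‖ g₁(X_s) − (Z − X₀) ‖² ≤ E‖ g₂(X_s) − (Z − X₀) ‖². In particular, g minimizes the flow-matching mean-squared loss at time s if and only if T(g) minimizes the TrigFlow mean-squared loss at time t. -/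

import Mathlib

open Real MeasureTheory

set_option maxHeartbeats 1000000 in
/-- Let `X₀` and `Z` be square-integrable `ℝᵈ`-valued random vectors, `s ∈ [0, 1)`,
`Xs = (1 − s)·X₀ + s·Z`, `t = arctan (s / (1 − s))`, `lam = √(s² + (1 − s)²)`, and let
`T` map a measurable `g : ℝᵈ → ℝᵈ` to `x ↦ (1/lam)·[(1 − 2s)·x + (1 − 2s + 2s²)·g x]`.
Then for all measurable `g₁, g₂` with `g₁ (Xs ·), g₂ (Xs ·)` square-integrable, the
TrigFlow losses of `T g₁, T g₂` compare exactly as the flow-matching losses of `g₁, g₂`;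
in particular, `g` minimizes the flow-matching mean-squared loss at time `s` iff `T g`
minimizes the TrigFlow mean-squared loss at time `t`. -/
theorem trig_loss_le_iff_flow_loss_le
    {Ω : Type*} [MeasurableSpace Ω] (μ : Measure Ω) [IsProbabilityMeasure μ]
    {d : ℕ} (X₀ Z : Ω → EuclideanSpace ℝ (Fin d))
    (hX₀m : Measurable X₀) (hZm : Measurable Z)
    (hX₀ : MemLp X₀ 2 μ) (hZ : MemLp Z 2 μ)
    (s : ℝ) (hs : s ∈ Set.Ico (0 : ℝ) 1)
    (Xs : Ω → EuclideanSpace ℝ (Fin d)) (hXs : Xs = fun ω => (1 - s) • X₀ ω + s • Z ω)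
    (t : ℝ) (ht : t = arctan (s / (1 - s)))
    (lam : ℝ) (hlam : lam = Real.sqrt (s ^ 2 + (1 - s) ^ 2))
    (T : (EuclideanSpace ℝ (Fin d) → EuclideanSpace ℝ (Fin d)) →
      (EuclideanSpace ℝ (Fin d) → EuclideanSpace ℝ (Fin d)))
    (hT : T = fun g x => (1 / lam) • ((1 - 2 * s) • x + (1 - 2 * s + 2 * s ^ 2) • g x)) :
    (∀ g₁ g₂ : EuclideanSpace ℝ (Fin d) → EuclideanSpace ℝ (Fin d),
      Measurable g₁ → Measurable g₂ →
      MemLp (fun ω => g₁ (Xs ω)) 2 μ → MemLp (fun ω => g₂ (Xs ω)) 2 μ →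
      ((∫ ω, ‖T g₁ (Xs ω) - (cos t • Z ω - sin t • X₀ ω)‖ ^ 2 ∂μ ≤
          ∫ ω, ‖T g₂ (Xs ω) - (cos t • Z ω - sin t • X₀ ω)‖ ^ 2 ∂μ) ↔
        (∫ ω, ‖g₁ (Xs ω) - (Z ω - X₀ ω)‖ ^ 2 ∂μ ≤
          ∫ ω, ‖g₂ (Xs ω) - (Z ω - X₀ ω)‖ ^ 2 ∂μ))) ∧
    (∀ g : EuclideanSpace ℝ (Fin d) → EuclideanSpace ℝ (Fin d),
      Measurable g → MemLp (fun ω => g (Xs ω)) 2 μ →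
      ((∀ g' : EuclideanSpace ℝ (Fin d) → EuclideanSpace ℝ (Fin d),
          Measurable g' → MemLp (fun ω => g' (Xs ω)) 2 μ →
          ∫ ω, ‖g (Xs ω) - (Z ω - X₀ ω)‖ ^ 2 ∂μ ≤
            ∫ ω, ‖g' (Xs ω) - (Z ω - X₀ ω)‖ ^ 2 ∂μ) ↔
        (∀ h : EuclideanSpace ℝ (Fin d) → EuclideanSpace ℝ (Fin d),
          Measurable h → MemLp (fun ω => h (Xs ω)) 2 μ →
          ∫ ω, ‖T g (Xs ω) - (cos t • Z ω - sin t • X₀ ω)‖ ^ 2 ∂μ ≤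
            ∫ ω, ‖h (Xs ω) - (cos t • Z ω - sin t • X₀ ω)‖ ^ 2 ∂μ))) := by
  obtain ⟨hs0, hs1⟩ := hs
  have h1s : 0 < 1 - s := by linarith
  have hlampos : 0 < lam := by
    rw [hlam]; positivity
  have hlamne : lam ≠ 0 := ne_of_gt hlampos
  have hlam2 : lam ^ 2 = 1 - 2 * s + 2 * s ^ 2 := by
    rw [hlam, sq_sqrt (by positivity)]; ring
  have hsq : Real.sqrt (1 + (s / (1 - s)) ^ 2) = lam / (1 - s) := by
    have h1 : 1 + (s / (1 - s)) ^ 2 = (lam / (1 - s)) ^ 2 := by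
      field_simp
      nlinarith [hlam2]
    rw [h1, Real.sqrt_sq (by positivity)]
  have hcos : Real.cos t = (1 - s) / lam := by
    rw [ht, Real.cos_arctan, hsq]
    field_simp
  have hsin : Real.sin t = s / lam := by
    rw [ht, Real.sin_arctan, hsq]
    field_simp
  have key : ∀ g : EuclideanSpace ℝ (Fin d) → EuclideanSpace ℝ (Fin d), ∀ ω,
      T g (Xs ω) - (Real.cos t • Z ω - Real.sin t • X₀ ω)
        = lam • (g (Xs ω) - (Z ω - X₀ ω)) := by
    intro g ω
    rw [hT, hXs, hcos, hsin]
    match_scalars <;> field_simp <;> nlinarith [hlam2]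
  have hXsL : MemLp Xs 2 μ := by
    rw [hXs]; exact (hX₀.const_smul (1 - s)).add (hZ.const_smul s)
  have hXsm : Measurable Xs := by
    rw [hXs]; fun_prop
  have hint : ∀ g : EuclideanSpace ℝ (Fin d) → EuclideanSpace ℝ (Fin d),
      ∫ ω, ‖T g (Xs ω) - (Real.cos t • Z ω - Real.sin t • X₀ ω)‖ ^ 2 ∂μ
        = lam ^ 2 * ∫ ω, ‖g (Xs ω) - (Z ω - X₀ ω)‖ ^ 2 ∂μ := by
    intro g
    rw [← integral_const_mul]
    congr 1
    funext ω
    rw [key g ω, norm_smul, mul_pow, Real.norm_eq_abs, sq_abs]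
  have hpos : (0 : ℝ) < lam ^ 2 := by positivity
  constructor
  · intro g₁ g₂ _ _ _ _
    rw [hint g₁, hint g₂]
    exact mul_le_mul_iff_right₀ hpos
  · intro g hg hgL
    constructor
    · intro H h hhm hhL
      set g' : EuclideanSpace ℝ (Fin d) → EuclideanSpace ℝ (Fin d) :=
        fun x => (lam ^ 2)⁻¹ • (lam • h x - (1 - 2 * s) • x) with hg'def
      have hTg' : ∀ x, T g' x = h x := by
        intro x
        simp only [hT, hg'def]
        match_scalars <;> field_simp <;> nlinarith [hlam2]
      have hg'm : Measurable g' := by fun_prop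
      have hg'L : MemLp (fun ω => g' (Xs ω)) 2 μ := by
        simp only [hg'def]
        exact ((hhL.const_smul lam).sub (hXsL.const_smul (1 - 2 * s))).const_smul (lam ^ 2)⁻¹
      have h1 : ∫ ω, ‖h (Xs ω) - (Real.cos t • Z ω - Real.sin t • X₀ ω)‖ ^ 2 ∂μ
          = lam ^ 2 * ∫ ω, ‖g' (Xs ω) - (Z ω - X₀ ω)‖ ^ 2 ∂μ := by
        rw [← hint g']
        congr 1
        funext ω
        rw [hTg']
      rw [hint g, h1]
      exact mul_le_mul_of_nonneg_left (H g' hg'm hg'L) hpos.le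
    · intro H g' hg'm hg'L
      have hTg'm : Measurable (T g') := by
        rw [hT]
        fun_prop
      have hTg'L : MemLp (fun ω => T g' (Xs ω)) 2 μ := by
        simp only [hT]
        have h := ((hXsL.const_smul (1 - 2 * s)).add (hg'L.const_smul (1 - 2 * s + 2 * s ^ 2))).const_smul (1 / lam)
        exact h
      have := H (T g') hTg'm hTg'L
      rw [hint g, hint g'] at this
      exact le_of_mul_le_mul_left this hpos
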